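/- Let Λ be a free ℤ-module of finite rank and let ℓ₁,…,ℓₙ be primitive nonzero elements of the dual lattice Λ^∨ = Hom(Λ,ℤ), viewed inside the real vector space Λ^∨ ⊗ ℝ. Then the following are equivalent: (i) every subset {ℓ_j}_{j∈J} ⊆ {ℓ₁,…,ℓₙ} that is ℝ-linearly independent is a ℤ-basis of the ℤ-module (ℝ-span of {ℓ_j}_{j∈J}) ∩ Λ^∨; (ii) every ℝ-linearly independent subset of {ℓ₁,…,ℓₙ} of maximal rank is a ℤ-basis of the ℤ-module (ℝ-span of that subset) ∩ Λ^∨. -/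

import Mathlib

open TensorProduct Set Submodule

theorem aux_indep {M ι : Type*} [AddCommGroup M] [Module ℤ M]
    (v : ι → M) (h : LinearIndependent ℝ (fun i => (1:ℝ) ⊗ₜ[ℤ] v i)) :
    LinearIndependent ℤ v := by
  have hinj : Function.Injective fun r : ℤ => r • (1 : ℝ) := by
    intro a b hab
    simpa using hab
  have h2 : LinearIndependent ℤ (fun i => (1:ℝ) ⊗ₜ[ℤ] v i) := h.restrict_scalars hinj
  exact LinearIndependent.of_comp (TensorProduct.mk ℤ ℝ M 1) h2


/-- Let `Λ` be a free `ℤ`-module of finite rank and let `ℓ₁, …, ℓₙ` be primitive nonzero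
elements of the dual lattice `Λ^∨ = Hom(Λ, ℤ)`, viewed inside the real vector space
`Λ^∨ ⊗ ℝ` via `x ↦ 1 ⊗ x`.  Then the following are equivalent:
(i) every `ℝ`-linearly independent subset `{ℓ_j}_{j ∈ J}` is a `ℤ`-basis of the `ℤ`-module
`(ℝ-span of {ℓ_j}_{j ∈ J}) ∩ Λ^∨`;
(ii) every `ℝ`-linearly independent subset of maximal rank is a `ℤ`-basis of the `ℤ`-module
`(ℝ-span of that subset) ∩ Λ^∨`. -/
theorem matroidal_iff_maximal_rank {Λ : Type*} [AddCommGroup Λ] [Module ℤ Λ]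
    [Module.Free ℤ Λ] [Module.Finite ℤ Λ] {n : ℕ}
    (ℓ : Fin n → Module.Dual ℤ Λ)
    (hprim : ∀ i, ℓ i ≠ 0 ∧
      ¬∃ (m : ℤ) (ℓ' : Module.Dual ℤ Λ), 2 ≤ |m| ∧ ℓ i = m • ℓ') :
    (∀ J : Set (Fin n),
        LinearIndependent ℝ (fun j : J => (1 : ℝ) ⊗ₜ[ℤ] ℓ j.1) →
        LinearIndependent ℤ (fun j : J => ℓ j.1) ∧
          Submodule.span ℤ (ℓ '' J) =
            Submodule.comap (TensorProduct.mk ℤ ℝ (Module.Dual ℤ Λ) 1)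
              ((Submodule.span ℝ
                  ((fun x : Module.Dual ℤ Λ => (1 : ℝ) ⊗ₜ[ℤ] x) '' (ℓ '' J))).restrictScalars ℤ)) ↔
    (∀ J : Set (Fin n),
        LinearIndependent ℝ (fun j : J => (1 : ℝ) ⊗ₜ[ℤ] ℓ j.1) →
        Submodule.span ℝ ((fun x : Module.Dual ℤ Λ => (1 : ℝ) ⊗ₜ[ℤ] x) '' (ℓ '' J)) =
          Submodule.span ℝ (Set.range fun i : Fin n => (1 : ℝ) ⊗ₜ[ℤ] ℓ i) →
        LinearIndependent ℤ (fun j : J => ℓ j.1) ∧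
          Submodule.span ℤ (ℓ '' J) =
            Submodule.comap (TensorProduct.mk ℤ ℝ (Module.Dual ℤ Λ) 1)
              ((Submodule.span ℝ
                  ((fun x : Module.Dual ℤ Λ => (1 : ℝ) ⊗ₜ[ℤ] x) '' (ℓ '' J))).restrictScalars ℤ)) := by
  constructor
  · intro h J hJ _
    exact h J hJ
  · intro h J hJ
    set f : Module.Dual ℤ Λ →ₗ[ℤ] ℝ ⊗[ℤ] Module.Dual ℤ Λ :=
      TensorProduct.mk ℤ ℝ (Module.Dual ℤ Λ) 1 with hf
    set g : Fin n → ℝ ⊗[ℤ] Module.Dual ℤ Λ := fun i => (1:ℝ) ⊗ₜ[ℤ] ℓ i with hg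
    have himg : ∀ S : Set (Fin n),
        (fun x : Module.Dual ℤ Λ => (1 : ℝ) ⊗ₜ[ℤ] x) '' (ℓ '' S) = g '' S := by
      intro S; rw [Set.image_image]
    refine ⟨aux_indep _ hJ, ?_⟩
    -- injectivity on J
    have hinjJ : Set.InjOn g J := by
      intro a ha b hb hab
      have := hJ.injective (a₁ := ⟨a, ha⟩) (a₂ := ⟨b, hb⟩) hab
      exact congrArg Subtype.val this
    have hset : LinearIndependent ℝ ((↑) : (g '' J) → ℝ ⊗[ℤ] Module.Dual ℤ Λ) :=
      (linearIndepOn_iff_image hinjJ).mp hJ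
    obtain ⟨b, hbt, hsb, htb, hbli⟩ :=
      exists_linearIndepOn_id_extension hset (Set.image_subset_range g J)
    choose φ hφ using fun v : b => hbt v.2
    set J' : Set (Fin n) := J ∪ (φ '' {v : b | v.1 ∉ g '' J}) with hJ'def
    have hJJ' : J ⊆ J' := Set.subset_union_left
    have hgJ' : g '' J' = b := by
      apply Set.Subset.antisymm
      · rintro _ ⟨i, hi, rfl⟩
        rcases hi with hi | ⟨v, hv, rfl⟩
        · exact hsb ⟨i, hi, rfl⟩
        · rw [hφ v]; exact v.2
      · intro v hv
        by_cases hvJ : v ∈ g '' J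
        · rcases hvJ with ⟨i, hi, rfl⟩; exact ⟨i, Or.inl hi, rfl⟩
        · exact ⟨φ ⟨v, hv⟩, Or.inr ⟨⟨v, hv⟩, hvJ, rfl⟩, hφ _⟩
    have hinj' : Set.InjOn g J' := by
      rintro a (ha | ⟨va, hva, rfl⟩) c (hc | ⟨vc, hvc, rfl⟩) hac
      · exact hinjJ ha hc hac
      · exact absurd (show vc.1 ∈ g '' J from hφ vc ▸ hac ▸ ⟨a, ha, rfl⟩) hvc
      · exact absurd (show va.1 ∈ g '' J from hφ va ▸ hac ▸ ⟨c, hc, rfl⟩) hva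
      · have : va = vc := Subtype.ext (by rw [← hφ va, ← hφ vc, hac])
        rw [this]
    have hJ'li : LinearIndependent ℝ (fun j : J' => g j) := by
      refine (linearIndepOn_iff_image hinj').mpr ?_; rw [hgJ']
      exact hbli
    have hspan' : Submodule.span ℝ (g '' J') = Submodule.span ℝ (Set.range g) := by
      rw [hgJ']
      exact le_antisymm (span_mono hbt) (span_le.mpr htb)
    obtain ⟨-, hspanJ'⟩ := h J' hJ'li (by rw [himg]; exact hspan')
    -- now prove the equality
    apply le_antisymm
    · rw [span_le]
      rintro y ⟨x, hx, rfl⟩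
      simp only [SetLike.mem_coe, Submodule.mem_comap, Submodule.restrictScalars_mem]
      exact subset_span ⟨ℓ x, ⟨x, hx, rfl⟩, rfl⟩
    · intro x hx
      simp only [Submodule.mem_comap, Submodule.restrictScalars_mem, himg] at hx
      replace hx : f x ∈ Submodule.span ℝ (g '' J) := by simp only [Set.image_eq_range] at hx ⊢; exact hx
      -- hx : f x ∈ span ℝ (g '' J)
      have hx' : x ∈ Submodule.span ℤ (ℓ '' J') := by
        rw [hspanJ']
        simp only [Submodule.mem_comap, Submodule.restrictScalars_mem, himg]
        exact span_mono (Set.image_mono (f := g) hJJ') hx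
      rw [Set.image_eq_range, Finsupp.mem_span_range_iff_exists_finsupp] at hx'
      obtain ⟨c, hc⟩ := hx'
      rw [Set.image_eq_range, Finsupp.mem_span_range_iff_exists_finsupp] at hx
      obtain ⟨r, hr⟩ := hx
      set incl : J → J' := fun j => ⟨j.1, hJJ' j.2⟩ with hincl
      have hinclinj : Function.Injective incl := fun a b hab => Subtype.ext (congrArg (Subtype.val : ↥J' → Fin n) hab)
      set d : ↥J' →₀ ℝ :=
        c.mapRange (Int.cast : ℤ → ℝ) (by simp) - r.mapDomain incl with hd
      have hd0 : d = 0 := by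
        apply linearIndependent_iff.mp hJ'li
        rw [hd, map_sub]
        have h1 : Finsupp.linearCombination ℝ (fun j : J' => g j.1)
            (c.mapRange (Int.cast : ℤ → ℝ) (by simp)) = f x := by
          rw [← hc, Finsupp.linearCombination_apply,
            Finsupp.sum_mapRange_index (by simp), map_finsuppSum]
          refine Finsupp.sum_congr fun i _ => ?_
          rw [Int.cast_smul_eq_zsmul, map_zsmul]
          rfl
        have h2 : Finsupp.linearCombination ℝ (fun j : J' => g j.1) (r.mapDomain incl) = f x := by
          rw [Finsupp.linearCombination_mapDomain, ← hr, Finsupp.linearCombination_apply]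
          rfl
        rw [h1, h2, sub_self]
      have hcJ : ∀ j : ↥J', j.1 ∉ J → c j = 0 := by
        intro j hj
        have h3 : d j = 0 := by rw [hd0]; rfl
        rw [hd] at h3
        simp only [Finsupp.sub_apply, Finsupp.mapRange_apply] at h3
        rw [Finsupp.mapDomain_notin_range] at h3
        · exact_mod_cast sub_zero ((c j : ℝ)) ▸ h3
        · rintro ⟨a, rfl⟩
          exact hj a.2
      rw [← hc]
      rw [Finsupp.sum]
      apply Submodule.sum_mem
      intro i hi
      by_cases hiJ : i.1 ∈ J
      · exact Submodule.smul_mem _ _ (subset_span ⟨i.1, hiJ, rfl⟩)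
      · rw [hcJ i hiJ, zero_smul]; exact Submodule.zero_mem _
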